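/- arXiv:1211.0039 — 5 statements merged into one kernel-verified Lean document; each statement's English description precedes it below -/
import Mathlib

section
/- Let I be the ideal generated by {x_j² − x_j : 1 ≤ j ≤ n} in R[x_1,…,x_n], and let A ⊆ B ⊆ {1,…,n}. Then the polynomial f = |B∖A| − x^A + x^B − ∑_{k ∈ B∖A} x_k is congruent modulo I to a sum of |B∖A| idempotent polynomials; consequently f is a sum of squares modulo I, and f is nonnegative on {0,1}^n. -/
open MvPolynomial

private noncomputable def Isp (n : ℕ) : Ideal (MvPolynomial (Fin n) ℝ) :=
  Ideal.span {p : MvPolynomial (Fin n) ℝ | ∃ l : Fin n, p = X l ^ 2 - X l}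

private lemma idem_mul {n : ℕ} {a b : MvPolynomial (Fin n) ℝ}
    (ha : a ^ 2 - a ∈ Isp n) (hb : b ^ 2 - b ∈ Isp n) :
    (a * b) ^ 2 - a * b ∈ Isp n := by
  have h : (a * b) ^ 2 - a * b = a ^ 2 * (b ^ 2 - b) + b * (a ^ 2 - a) := by ring
  rw [h]
  exact Ideal.add_mem _ (Ideal.mul_mem_left _ _ hb) (Ideal.mul_mem_left _ _ ha)

private lemma X_idem {n : ℕ} (l : Fin n) :
    (X l : MvPolynomial (Fin n) ℝ) ^ 2 - X l ∈ Isp n :=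
  Ideal.subset_span ⟨l, rfl⟩

private lemma oneSub_idem {n : ℕ} {a : MvPolynomial (Fin n) ℝ}
    (ha : a ^ 2 - a ∈ Isp n) : (1 - a) ^ 2 - (1 - a) ∈ Isp n := by
  have h : (1 - a) ^ 2 - (1 - a) = a ^ 2 - a := by ring
  rw [h]; exact ha

private lemma prod_idem {n : ℕ} (s : Finset (Fin n)) :
    (∏ i ∈ s, X i : MvPolynomial (Fin n) ℝ) ^ 2 - ∏ i ∈ s, X i ∈ Isp n := by
  classical
  induction s using Finset.induction_on with
  | empty => simp
  | @insert a s ha ih =>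
    rw [Finset.prod_insert ha]
    exact idem_mul (X_idem a) ih

private lemma key {n : ℕ} (A : Finset (Fin n)) (s : Finset (Fin n)) (hd : Disjoint A s) :
    ∃ g : Fin s.card → MvPolynomial (Fin n) ℝ,
      (∀ j, (g j) ^ 2 - g j ∈ Isp n) ∧
      ((s.card : MvPolynomial (Fin n) ℝ) - ∏ i ∈ A, X i + ∏ i ∈ A ∪ s, X i -
        ∑ k ∈ s, X k) - ∑ j, g j ∈ Isp n := by
  classical
  induction s using Finset.induction_on with
  | empty =>
    exact ⟨fun _ => 0, fun j => by simp, by simp⟩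
  | @insert a s has ih =>
    obtain ⟨g, hg, hsum⟩ := ih (hd.mono_right (Finset.subset_insert a s))
    have haA : a ∉ A := fun h => (Finset.disjoint_left.mp hd h (Finset.mem_insert_self a s))
    have haAs : a ∉ A ∪ s := by simp [haA, has]
    have hprod : (∏ i ∈ A ∪ insert a s, X i : MvPolynomial (Fin n) ℝ)
        = X a * ∏ i ∈ A ∪ s, X i := by
      rw [Finset.union_insert, Finset.prod_insert haAs]
    rw [Finset.card_insert_of_notMem has]
    refine ⟨Fin.cons ((1 - X a) * (1 - ∏ i ∈ A ∪ s, X i)) g, ?_, ?_⟩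
    · intro j
      refine Fin.cases ?_ (fun i => ?_) j
      · simp only [Fin.cons_zero]
        exact idem_mul (oneSub_idem (X_idem a)) (oneSub_idem (prod_idem _))
      · simpa using hg i
    · rw [Fin.sum_cons, Finset.sum_insert has, hprod]
      convert hsum using 1
      push_cast
      ring

/-- Lemma 3.1 of the paper: with `A ⊆ B ⊆ {1,…,n}` and
`f = |B∖A| - x^A + x^B - ∑_{k∈B∖A} x_k`, the polynomial `f` is a sum of `|B∖A|`
idempotents mod `I = ⟨x_j² - x_j⟩`, hence a sum of squares mod `I`, and is
nonnegative on `{0,1}^n`. -/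
theorem sos_lemma (n : ℕ) (A B : Finset (Fin n)) (hAB : A ⊆ B) :
    let I : Ideal (MvPolynomial (Fin n) ℝ) :=
      Ideal.span {p : MvPolynomial (Fin n) ℝ | ∃ l : Fin n, p = X l ^ 2 - X l}
    let f : MvPolynomial (Fin n) ℝ :=
      (((B \ A).card : MvPolynomial (Fin n) ℝ)) - ∏ i ∈ A, X i + ∏ i ∈ B, X i -
        ∑ k ∈ B \ A, X k
    (∃ g : Fin (B \ A).card → MvPolynomial (Fin n) ℝ,
        (∀ j, (g j) ^ 2 - g j ∈ I) ∧ f - ∑ j, g j ∈ I) ∧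
      (∃ (m : ℕ) (g : Fin m → MvPolynomial (Fin n) ℝ), f - ∑ j, (g j) ^ 2 ∈ I) ∧
      (∀ x : Fin n → ℝ, (∀ i, x i = 0 ∨ x i = 1) → 0 ≤ eval x f) := by
  intro I f
  have hIsp : I = Isp n := rfl
  obtain ⟨g, hg, hsum⟩ := key A (B \ A) Finset.disjoint_sdiff
  rw [Finset.union_sdiff_of_subset hAB] at hsum
  have hsum' : f - ∑ j, g j ∈ I := hsum
  have hsq : f - ∑ j, (g j) ^ 2 ∈ I := by
    have h : f - ∑ j, (g j) ^ 2
        = (f - ∑ j, g j) - ∑ j, ((g j) ^ 2 - g j) := by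
      rw [Finset.sum_sub_distrib]; ring
    rw [h]
    exact Ideal.sub_mem _ hsum' (Ideal.sum_mem _ fun j _ => hg j)
  refine ⟨⟨g, hg, hsum'⟩, ⟨_, g, hsq⟩, ?_⟩
  intro x hx
  have hker : I ≤ RingHom.ker (eval x) := by
    rw [hIsp, Isp, Ideal.span_le]
    rintro p ⟨l, rfl⟩
    rcases hx l with h | h <;> simp [RingHom.mem_ker, h]
  have h0 : eval x (f - ∑ j, (g j) ^ 2) = 0 := hker hsq
  rw [map_sub, sub_eq_zero] at h0
  rw [h0, map_sum]
  exact Finset.sum_nonneg fun j _ => by rw [map_pow]; positivity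
end

section
/- Let V ⊆ {0,1}^n be lower-comprehensive (downward closed under the componentwise order) and contain all standard basis vectors. Then the vanishing ideal of V is generated by {x_j² − x_j : j = 1,…,n} together with the monomials x^S = ∏_{i∈S} x_i for all S whose characteristic vector is not in V, and the monomials {x^S : χ_S ∈ V} form a vector-space basis of R[x_1,…,x_n]/I(V). -/
open MvPolynomial

lemma prod_mul_idem {n : ℕ} {R : Type*} [CommRing R] (e : Fin n → R) (he : ∀ i, e i * e i = e i)
    (S : Finset (Fin n)) (i : Fin n) : (∏ j ∈ S, e j) * e i = ∏ j ∈ insert i S, e j := by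
  by_cases h : i ∈ S
  · rw [Finset.insert_eq_self.mpr h, ← Finset.mul_prod_erase S e h]
    rw [mul_comm (e i), mul_assoc, he]
  · rw [Finset.prod_insert h, mul_comm]

lemma eval_prodX_chi {n : ℕ} (S T : Finset (Fin n)) :
    eval (fun i => if i ∈ S then (1:ℝ) else 0) (∏ i ∈ T, X i) = if T ⊆ S then 1 else 0 := by
  rw [map_prod]
  simp only [eval_X]
  by_cases h : T ⊆ S
  · rw [if_pos h, Finset.prod_eq_one]
    intro i hi; rw [if_pos (h hi)]
  · rw [if_neg h]
    obtain ⟨i, hiT, hiS⟩ := Finset.not_subset.mp h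
    exact Finset.prod_eq_zero hiT (if_neg hiS)

set_option maxHeartbeats 1000000 in
set_option synthInstance.maxHeartbeats 400000 in
lemma span_prodX_top {n : ℕ} (J : Ideal (MvPolynomial (Fin n) ℝ))
    (hJ : ∀ j : Fin n, X j ^ 2 - X j ∈ J) :
    Submodule.span ℝ (Set.range fun S : Finset (Fin n) =>
      Ideal.Quotient.mk J (∏ i ∈ S, X i)) = ⊤ := by
  set mkJ := Ideal.Quotient.mk J with hmkJ
  have he : ∀ i, mkJ (X i) * mkJ (X i) = mkJ (X i) := by
    intro i
    rw [← map_mul, Ideal.Quotient.mk_eq_mk_iff_sub_mem]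
    simpa [sq] using hJ i
  rw [eq_top_iff]
  rintro x -
  obtain ⟨p, rfl⟩ := Ideal.Quotient.mk_surjective x
  induction p using MvPolynomial.induction_on with
  | C a =>
      have h1 : mkJ (C a) = a • mkJ (∏ i ∈ (∅ : Finset (Fin n)), X i) := by
        rw [Finset.prod_empty,
          show (C a : MvPolynomial (Fin n) ℝ) = a • 1 by
            rw [MvPolynomial.smul_eq_C_mul, mul_one]]
        rfl
      rw [h1]
      exact Submodule.smul_mem _ a (Submodule.subset_span ⟨∅, rfl⟩)
  | add p q hp hq =>
      rw [map_add]; exact Submodule.add_mem _ hp hq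
  | mul_X p i hp =>
      rw [map_mul]
      refine Submodule.span_induction ?_ ?_ ?_ ?_ hp
      · rintro y ⟨S, rfl⟩
        show mkJ (∏ i ∈ S, X i) * mkJ (X i) ∈ _
        rw [map_prod, prod_mul_idem (fun j => mkJ (X j)) he S i, ← map_prod]
        exact Submodule.subset_span ⟨insert i S, rfl⟩
      · rw [zero_mul]; exact Submodule.zero_mem _
      · intro y z _ _ hy hz; rw [add_mul]; exact Submodule.add_mem _ hy hz
      · intro a y _ hy
        rw [smul_mul_assoc a y (mkJ (X i))]
        exact Submodule.smul_mem _ a hy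

lemma linInd_prodX {n : ℕ} (V : Set (Fin n → ℝ)) :
    LinearIndependent ℝ
      (fun S : {S : Finset (Fin n) // (fun i => if i ∈ S then (1:ℝ) else 0) ∈ V} =>
        Ideal.Quotient.mk (vanishingIdeal ℝ V) (∏ i ∈ S.1, X i)) := by
  classical
  rw [Fintype.linearIndependent_iff]
  intro g hg
  have hp : (∑ S : {S : Finset (Fin n) // (fun i => if i ∈ S then (1:ℝ) else 0) ∈ V},
      g S • ∏ i ∈ S.1, X i) ∈ vanishingIdeal ℝ V := by
    rw [← Ideal.Quotient.eq_zero_iff_mem, map_sum]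
    exact hg
  have heval : ∀ S : {S : Finset (Fin n) // (fun i => if i ∈ S then (1:ℝ) else 0) ∈ V},
      ∑ T : {S : Finset (Fin n) // (fun i => if i ∈ S then (1:ℝ) else 0) ∈ V},
        g T * (if T.1 ⊆ S.1 then 1 else 0) = 0 := by
    intro S
    have h0 := (mem_vanishingIdeal_iff.mp hp) _ S.2
    rw [aeval_eq_eval, map_sum] at h0
    have hc : ∀ T : {S : Finset (Fin n) // (fun i => if i ∈ S then (1:ℝ) else 0) ∈ V},
        (eval fun i => if i ∈ S.1 then (1:ℝ) else 0) (g T • ∏ i ∈ T.1, X i)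
          = g T * (if T.1 ⊆ S.1 then 1 else 0) := by
      intro T
      rw [smul_eq_C_mul, map_mul, eval_C, eval_prodX_chi]
    rw [Finset.sum_congr rfl fun T _ => (hc T).symm]
    exact h0
  have key : ∀ m : ℕ, ∀ S : {S : Finset (Fin n) // (fun i => if i ∈ S then (1:ℝ) else 0) ∈ V},
      S.1.card = m → g S = 0 := by
    intro m
    induction m using Nat.strong_induction_on with
    | _ m ih =>
      intro S hcard
      have h0 := heval S
      rw [Finset.sum_eq_single S ?_ (by simp)] at h0
      · simpa using h0
      · intro T _ hTS
        by_cases hsub : T.1 ⊆ S.1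
        · have hne : T.1 ≠ S.1 := fun h => hTS (Subtype.ext h)
          have hlt : T.1.card < m := hcard ▸ Finset.card_lt_card (lt_of_le_of_ne hsub hne)
          rw [ih T.1.card hlt T rfl, zero_mul]
        · rw [if_neg hsub, mul_zero]
  intro S
  exact key S.1.card S rfl


set_option maxHeartbeats 2000000 in
set_option synthInstance.maxHeartbeats 400000 in
/-- Lemma 2.1 of the paper: for a lower-comprehensive `V ⊆ {0,1}^n` containing the
standard basis vectors, the vanishing ideal of `V` is generated by the `x_j² - x_j`
together with the monomials `x^S` for `χ_S ∉ V`, and the monomials `x^S` with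
`χ_S ∈ V` form a vector-space basis of the quotient ring. -/
theorem vanishingIdeal_lowerComprehensive (n : ℕ) (V : Set (Fin n → ℝ))
    (h01 : ∀ v ∈ V, ∀ i, v i = 0 ∨ v i = 1)
    (hlc : ∀ v ∈ V, ∀ w : Fin n → ℝ, (∀ i, w i = 0 ∨ w i = 1) →
      (∀ i, w i ≤ v i) → w ∈ V)
    (hbasis : ∀ j : Fin n, (fun i => if i = j then (1 : ℝ) else 0) ∈ V) :
    MvPolynomial.vanishingIdeal ℝ V =
        Ideal.span ({p : MvPolynomial (Fin n) ℝ | ∃ j : Fin n, p = X j ^ 2 - X j} ∪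
          {p : MvPolynomial (Fin n) ℝ | ∃ S : Finset (Fin n),
            (fun i => if i ∈ S then (1 : ℝ) else 0) ∉ V ∧ p = ∏ i ∈ S, X i}) ∧
      ∃ b : Module.Basis {S : Finset (Fin n) // (fun i => if i ∈ S then (1 : ℝ) else 0) ∈ V} ℝ
          (MvPolynomial (Fin n) ℝ ⧸ MvPolynomial.vanishingIdeal ℝ V),
        ∀ S, b S = Ideal.Quotient.mk (MvPolynomial.vanishingIdeal ℝ V) (∏ i ∈ S.1, X i) := by
  classical
  set J := Ideal.span ({p : MvPolynomial (Fin n) ℝ | ∃ j : Fin n, p = X j ^ 2 - X j} ∪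
    {p : MvPolynomial (Fin n) ℝ | ∃ S : Finset (Fin n),
      (fun i => if i ∈ S then (1 : ℝ) else 0) ∉ V ∧ p = ∏ i ∈ S, X i}) with hJdef
  have hgen_sq : ∀ j : Fin n, X j ^ 2 - X j ∈ J :=
    fun j => Ideal.subset_span (Or.inl ⟨j, rfl⟩)
  have hgen_S : ∀ S : Finset (Fin n), (fun i => if i ∈ S then (1:ℝ) else 0) ∉ V →
      (∏ i ∈ S, X i) ∈ J :=
    fun S h => Ideal.subset_span (Or.inr ⟨S, h, rfl⟩)
  -- J ≤ vanishing ideal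
  have hJle : J ≤ vanishingIdeal ℝ V := by
    rw [hJdef, Ideal.span_le]
    rintro p (⟨j, rfl⟩ | ⟨S, hS, rfl⟩)
    · rw [SetLike.mem_coe, mem_vanishingIdeal_iff]
      intro v hv
      rw [aeval_eq_eval, map_sub, map_pow, eval_X]
      rcases h01 v hv j with h | h <;> rw [h] <;> ring
    · rw [SetLike.mem_coe, mem_vanishingIdeal_iff]
      intro v hv
      rw [aeval_eq_eval, map_prod]
      simp only [eval_X]
      by_cases hall : ∀ i ∈ S, v i = 1
      · exfalso
        apply hS
        refine hlc v hv _ (fun i => ?_) (fun i => ?_)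
        · by_cases h : i ∈ S <;> simp [h]
        · by_cases h : i ∈ S
          · rw [if_pos h, hall i h]
          · rw [if_neg h]
            rcases h01 v hv i with h' | h' <;> rw [h'] <;> norm_num
      · push_neg at hall
        obtain ⟨i, hiS, hi⟩ := hall
        have hi0 : v i = 0 := (h01 v hv i).resolve_right hi
        exact Finset.prod_eq_zero hiS hi0
  -- vanishing ideal ≤ J
  have hIle : vanishingIdeal ℝ V ≤ J := by
    intro p hp
    have htop := span_prodX_top J hgen_sq
    have hmem : Ideal.Quotient.mk J p ∈ Submodule.span ℝ (Set.range fun S : Finset (Fin n) =>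
        Ideal.Quotient.mk J (∏ i ∈ S, X i)) := htop ▸ Submodule.mem_top
    obtain ⟨c, hc⟩ := Submodule.mem_span_range_iff_exists_fun ℝ |>.mp hmem
    set q : MvPolynomial (Fin n) ℝ :=
      ∑ S : Finset (Fin n), if (fun i => if i ∈ S then (1:ℝ) else 0) ∈ V
        then c S • ∏ i ∈ S, X i else 0 with hqdef
    have hqJ : Ideal.Quotient.mk J q = Ideal.Quotient.mk J p := by
      rw [hqdef, map_sum, ← hc]
      refine Finset.sum_congr rfl fun S _ => ?_
      by_cases h : (fun i => if i ∈ S then (1:ℝ) else 0) ∈ V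
      · rw [if_pos h]; rfl
      · rw [if_neg h, map_zero, Ideal.Quotient.eq_zero_iff_mem.mpr (hgen_S S h), smul_zero]
    have hsub : p - q ∈ J := by
      rw [← Ideal.Quotient.mk_eq_mk_iff_sub_mem]
      exact hqJ.symm
    have hqV : q ∈ vanishingIdeal ℝ V := by
      have : q = p - (p - q) := by ring
      rw [this]
      exact Submodule.sub_mem _ hp (hJle hsub)
    -- rewrite mk_I q as a sum over the subtype and use linear independence
    have hqI : Ideal.Quotient.mk (vanishingIdeal ℝ V) q = 0 :=
      Ideal.Quotient.eq_zero_iff_mem.mpr hqV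
    have hsum : ∑ S : {S : Finset (Fin n) // (fun i => if i ∈ S then (1:ℝ) else 0) ∈ V},
        c S.1 • Ideal.Quotient.mk (vanishingIdeal ℝ V) (∏ i ∈ S.1, X i) = 0 := by
      have e1 : ∀ S : Finset (Fin n), Ideal.Quotient.mk (vanishingIdeal ℝ V)
          (if (fun i => if i ∈ S then (1:ℝ) else 0) ∈ V then c S • ∏ i ∈ S, X i else 0)
        = if (fun i => if i ∈ S then (1:ℝ) else 0) ∈ V
            then c S • Ideal.Quotient.mk (vanishingIdeal ℝ V) (∏ i ∈ S, X i) else 0 := by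
        intro S
        split
        · rfl
        · exact map_zero _
      have e2 : Ideal.Quotient.mk (vanishingIdeal ℝ V) q
          = ∑ S : {S : Finset (Fin n) // (fun i => if i ∈ S then (1:ℝ) else 0) ∈ V},
              c S.1 • Ideal.Quotient.mk (vanishingIdeal ℝ V) (∏ i ∈ S.1, X i) := by
        rw [hqdef, map_sum]
        rw [Finset.sum_congr rfl fun S _ => e1 S]
        rw [← Finset.sum_filter]
        exact Finset.sum_subtype _ (by simp) _
      rw [← e2]
      exact hqI
    have hczero : ∀ S : {S : Finset (Fin n) // (fun i => if i ∈ S then (1:ℝ) else 0) ∈ V},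
        c S.1 = 0 := Fintype.linearIndependent_iff.mp (linInd_prodX V) _ hsum
    have hq0 : q = 0 := by
      rw [hqdef]
      refine Finset.sum_eq_zero fun S _ => ?_
      by_cases h : (fun i => if i ∈ S then (1:ℝ) else 0) ∈ V
      · rw [if_pos h, hczero ⟨S, h⟩, zero_smul]
      · rw [if_neg h]
    have : p = p - q := by rw [hq0, sub_zero]
    rw [this]
    exact hsub
  have hEq : vanishingIdeal ℝ V = J := le_antisymm hIle hJle
  refine ⟨hEq, ?_⟩
  -- basis
  have htop' : ⊤ ≤ Submodule.span ℝ (Set.range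
      (fun S : {S : Finset (Fin n) // (fun i => if i ∈ S then (1:ℝ) else 0) ∈ V} =>
        Ideal.Quotient.mk (vanishingIdeal ℝ V) (∏ i ∈ S.1, X i))) := by
    have h1 := span_prodX_top (vanishingIdeal ℝ V) (fun j => hEq ▸ hgen_sq j)
    rw [← h1]
    refine Submodule.span_le.mpr ?_
    rintro x ⟨S, rfl⟩
    by_cases h : (fun i => if i ∈ S then (1:ℝ) else 0) ∈ V
    · exact Submodule.subset_span ⟨⟨S, h⟩, rfl⟩
    · have : Ideal.Quotient.mk (vanishingIdeal ℝ V) (∏ i ∈ S, X i) = 0 :=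
        Ideal.Quotient.eq_zero_iff_mem.mpr (hEq ▸ hgen_S S h)
      show Ideal.Quotient.mk (vanishingIdeal ℝ V) (∏ i ∈ S, X i) ∈ _
      rw [this]
      exact Submodule.zero_mem _
  refine ⟨Module.Basis.mk (linInd_prodX V) htop', fun S => Module.Basis.mk_apply _ _ _⟩
end

section
/- Let V ⊆ {0,1}^n be lower-comprehensive with vanishing ideal I, and suppose every x ∈ {0,1}^n ∖ V satisfies ∑_j x_j ≥ k. If a polynomial F ∈ I has degree less than k, then F lies in the ideal generated by {x_j² − x_j : j = 1,…,n} alone. -/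
open MvPolynomial

noncomputable section BoolAux

/-- Multilinear squash of an exponent vector: cap each exponent at 1. -/
def mSq {σ : Type*} (d : σ →₀ ℕ) : σ →₀ ℕ :=
  Finsupp.mapRange (fun m => min m 1) (by simp) d

lemma mSq_apply {σ : Type*} (d : σ →₀ ℕ) (i : σ) : mSq d i = min (d i) 1 := rfl

lemma mSq_support {σ : Type*} [DecidableEq σ] (d : σ →₀ ℕ) : (mSq d).support = d.support := by
  ext i
  simp only [Finsupp.mem_support_iff, mSq_apply]
  omega

lemma pow_sub_mem {σ : Type*} (j : σ) (m : ℕ) (hm : 1 ≤ m) :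
    (X j ^ m - X j : MvPolynomial σ ℝ) ∈
      Ideal.span {p : MvPolynomial σ ℝ | ∃ i, p = X i ^ 2 - X i} := by
  induction m with
  | zero => omega
  | succ m ih =>
    rcases Nat.lt_or_ge 1 (m + 1) with h | h
    · have hm' : 1 ≤ m := by omega
      have h1 := ih hm'
      have key : (X j ^ (m + 1) - X j : MvPolynomial σ ℝ)
          = X j * (X j ^ m - X j) + (X j ^ 2 - X j) := by ring
      rw [key]
      exact Ideal.add_mem _ (Ideal.mul_mem_left _ _ h1) (Ideal.subset_span ⟨j, rfl⟩)
    · have : m = 0 := by omega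
      subst this
      simp

lemma prod_sub_prod_mem {α : Type*} {R : Type*} [CommRing R] (I : Ideal R)
    (s : Finset α) (f g : α → R) (h : ∀ i ∈ s, f i - g i ∈ I) :
    (∏ i ∈ s, f i) - (∏ i ∈ s, g i) ∈ I := by
  classical
  induction s using Finset.induction with
  | empty => simp
  | @insert a s ha ih =>
    rw [Finset.prod_insert ha, Finset.prod_insert ha]
    have key : f a * ∏ i ∈ s, f i - g a * ∏ i ∈ s, g i
        = f a * ((∏ i ∈ s, f i) - ∏ i ∈ s, g i) + (f a - g a) * ∏ i ∈ s, g i := by ring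
    rw [key]
    exact Ideal.add_mem _
      (Ideal.mul_mem_left _ _ (ih fun i hi => h i (Finset.mem_insert_of_mem hi)))
      (Ideal.mul_mem_right _ _ (h a (Finset.mem_insert_self a s)))

lemma monomial_sub_mem {σ : Type*} [DecidableEq σ] (d : σ →₀ ℕ) (c : ℝ) :
    (monomial d c - monomial (mSq d) c : MvPolynomial σ ℝ) ∈
      Ideal.span {p : MvPolynomial σ ℝ | ∃ i, p = X i ^ 2 - X i} := by
  rw [monomial_eq, monomial_eq]
  have h1 : (d.prod fun i e => (X i : MvPolynomial σ ℝ) ^ e)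
      = ∏ i ∈ d.support, X i ^ d i := rfl
  have h2 : ((mSq d).prod fun i e => (X i : MvPolynomial σ ℝ) ^ e)
      = ∏ i ∈ d.support, X i := by
    rw [Finsupp.prod, mSq_support]
    apply Finset.prod_congr rfl
    intro i hi
    have : d i ≠ 0 := Finsupp.mem_support_iff.mp hi
    have : mSq d i = 1 := by rw [mSq_apply]; omega
    rw [this, pow_one]
  rw [h1, h2, ← mul_sub]
  apply Ideal.mul_mem_left
  apply prod_sub_prod_mem
  intro i hi
  have : d i ≠ 0 := Finsupp.mem_support_iff.mp hi
  exact pow_sub_mem i (d i) (by omega)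

/-- A multilinear polynomial of low degree vanishing at all 0/1 points with few ones is zero. -/
lemma multilinear_eq_zero (n k : ℕ) (G : MvPolynomial (Fin n) ℝ)
    (hml : ∀ d ∈ G.support, ∀ i, d i ≤ 1)
    (hdeg : ∀ d ∈ G.support, d.support.card < k)
    (hvan : ∀ x : Fin n → ℝ, (∀ i, x i = 0 ∨ x i = 1) →
      (Finset.univ.filter (fun j => x j = 1)).card < k → eval x G = 0) :
    G = 0 := by
  classical
  suffices h : ∀ m : ℕ, ∀ e : Fin n →₀ ℕ, e.support.card = m → coeff e G = 0 by
    ext e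
    simp [h e.support.card e rfl]
  intro m
  induction m using Nat.strong_induction_on with
  | _ m ih =>
    intro e hcard
    by_cases he : e ∈ G.support
    case neg => exact notMem_support_iff.mp he
    -- x is the indicator vector of the support of e
    set x : Fin n → ℝ := fun i => if i ∈ e.support then 1 else 0 with hx
    have hx01 : ∀ i, x i = 0 ∨ x i = 1 := by
      intro i
      by_cases h : i ∈ e.support
      · right; simp only [hx]; rw [if_pos h]
      · left; simp only [hx]; rw [if_neg h]
    have hfilter : Finset.univ.filter (fun j => x j = 1) = e.support := by
      ext i
      simp only [Finset.mem_filter, Finset.mem_univ, true_and]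
      by_cases h : i ∈ e.support
      · have : x i = 1 := by simp only [hx]; rw [if_pos h]
        rw [this]; simp [h]
      · have : x i = 0 := by simp only [hx]; rw [if_neg h]
        rw [this]
        constructor
        · intro h0; exact absurd h0 (by norm_num)
        · intro hmem; exact absurd hmem h
    have hcardx : (Finset.univ.filter (fun j => x j = 1)).card < k := by
      rw [hfilter, hcard]; rw [← hcard]; exact hdeg e he
    have heval := hvan x hx01 (by rw [hfilter]; exact hdeg e he)
    rw [eval_eq] at heval
    -- each term's product is an indicator of support inclusion
    have hprod : ∀ d ∈ G.support,
        (∏ i ∈ d.support, x i ^ d i) = if d.support ⊆ e.support then 1 else 0 := by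
      intro d hd
      by_cases hsub : d.support ⊆ e.support
      · rw [if_pos hsub]
        apply Finset.prod_eq_one
        intro i hi
        have : x i = 1 := by simp only [hx]; rw [if_pos (hsub hi)]
        rw [this, one_pow]
      · rw [if_neg hsub]
        obtain ⟨i, hi, hni⟩ := Finset.not_subset.mp hsub
        refine Finset.prod_eq_zero hi ?_
        have hx0 : x i = 0 := by simp only [hx]; rw [if_neg hni]
        have : d i ≠ 0 := Finsupp.mem_support_iff.mp hi
        rw [hx0, zero_pow this]
    have hsum : (∑ d ∈ G.support, coeff d G * ∏ i ∈ d.support, x i ^ d i) = coeff e G := by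
      rw [Finset.sum_eq_single e]
      · rw [hprod e he, if_pos (Finset.Subset.refl _), mul_one]
      · intro d hd hne
        rw [hprod d hd]
        by_cases hsub : d.support ⊆ e.support
        · rw [if_pos hsub, mul_one]
          -- d.support ⊊ e.support, else d = e
          have hssub : d.support ⊂ e.support := by
            refine Finset.ssubset_iff_subset_ne.mpr ⟨hsub, ?_⟩
            intro hsupp
            apply hne
            ext i
            by_cases hi : i ∈ d.support
            · have h1 : d i ≤ 1 := hml d hd i
              have h2 : e i ≤ 1 := hml e he i
              have hd1 : d i ≠ 0 := Finsupp.mem_support_iff.mp hi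
              have hi' : i ∈ e.support := hsupp ▸ hi
              have he1 : e i ≠ 0 := Finsupp.mem_support_iff.mp hi'
              omega
            · have hi' : i ∉ e.support := fun h => hi (hsupp ▸ h)
              rw [Finsupp.notMem_support_iff.mp hi, Finsupp.notMem_support_iff.mp hi']
          have : d.support.card < m := hcard ▸ Finset.card_lt_card hssub
          rw [ih _ this d rfl]
        · rw [if_neg hsub, mul_zero]
      · intro h; exact absurd he h
    rw [hsum] at heval
    exact heval

end BoolAux

/-- Key step of Lemma 2.2: if every 0/1 point outside the lower-comprehensive set `V`
has at least `k` ones, then every polynomial of degree `< k` vanishing on `V` lies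
in the ideal generated by the `x_j² - x_j` alone. -/
theorem low_degree_in_boolean_ideal (n k : ℕ) (V : Set (Fin n → ℝ))
    (h01 : ∀ v ∈ V, ∀ i, v i = 0 ∨ v i = 1)
    (hlc : ∀ v ∈ V, ∀ w : Fin n → ℝ, (∀ i, w i = 0 ∨ w i = 1) →
      (∀ i, w i ≤ v i) → w ∈ V)
    (hk : ∀ x : Fin n → ℝ, (∀ i, x i = 0 ∨ x i = 1) → x ∉ V →
      k ≤ (Finset.univ.filter (fun j => x j = 1)).card)
    (F : MvPolynomial (Fin n) ℝ) (hF : F ∈ MvPolynomial.vanishingIdeal ℝ V)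
    (hdeg : F.totalDegree < k) :
    F ∈ Ideal.span {p : MvPolynomial (Fin n) ℝ | ∃ j : Fin n, p = X j ^ 2 - X j} := by
  classical
  set J := Ideal.span {p : MvPolynomial (Fin n) ℝ | ∃ j : Fin n, p = X j ^ 2 - X j} with hJ
  -- multilinear reduction of F
  set G : MvPolynomial (Fin n) ℝ :=
    ∑ d ∈ F.support, monomial (mSq d) (coeff d F) with hG
  have hFG : F - G ∈ J := by
    have h1 : (∑ d ∈ F.support, monomial d (coeff d F)) - G
        = ∑ d ∈ F.support, (monomial d (coeff d F) - monomial (mSq d) (coeff d F)) := by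
      rw [hG, Finset.sum_sub_distrib]
    rw [← F.as_sum] at h1
    rw [h1]
    exact Ideal.sum_mem _ fun d _ => monomial_sub_mem d (coeff d F)
  -- G agrees with F at 0/1 points
  have hagree : ∀ x : Fin n → ℝ, (∀ i, x i = 0 ∨ x i = 1) → eval x G = eval x F := by
    intro x hx01
    conv_rhs => rw [F.as_sum]
    rw [hG, map_sum, map_sum]
    apply Finset.sum_congr rfl
    intro d _
    rw [eval_monomial, eval_monomial]
    congr 1
    rw [Finsupp.prod, Finsupp.prod, mSq_support]
    apply Finset.prod_congr rfl
    intro i hi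
    have hd : d i ≠ 0 := Finsupp.mem_support_iff.mp hi
    have h1 : mSq d i = 1 := by rw [mSq_apply]; omega
    rw [h1, pow_one]
    rcases hx01 i with h | h
    · rw [h, zero_pow hd]
    · rw [h, one_pow]
  -- support of G consists of multilinear exponents of small support
  have hsupp : ∀ e ∈ G.support, ∃ d ∈ F.support, e = mSq d := by
    intro e he
    rw [hG] at he
    obtain ⟨d, hd, hde⟩ := Finset.mem_biUnion.mp (MvPolynomial.support_sum he)
    refine ⟨d, hd, ?_⟩
    have := support_monomial_subset hde
    exact (Finset.mem_singleton.mp this)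
  have hG0 : G = 0 := by
    apply multilinear_eq_zero n k
    · intro e he i
      obtain ⟨d, _, rfl⟩ := hsupp e he
      rw [mSq_apply]; omega
    · intro e he
      obtain ⟨d, hd, rfl⟩ := hsupp e he
      rw [mSq_support]
      calc d.support.card ≤ d.sum fun _ m => m := by
            rw [Finsupp.sum]
            refine le_trans ?_ (Finset.card_nsmul_le_sum d.support _ 1 ?_)
            · simp
            · intro i hi
              have : d i ≠ 0 := Finsupp.mem_support_iff.mp hi
              omega
        _ ≤ F.totalDegree := le_totalDegree hd
        _ < k := hdeg
    · intro x hx01 hcard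
      rw [hagree x hx01]
      have hxV : x ∈ V := by
        by_contra hxV
        exact absurd (hk x hx01 hxV) (by omega)
      exact hF x hxV
  rw [hG0, sub_zero] at hFG
  exact hFG
end

section
/- Let I be the ideal generated by {x_j² − x_j : 1 ≤ j ≤ n} together with all monomials x_{a}x_{b}x_{c} for triangles {a,b,c} of a graph, specialized to the triangle ideal on three variables: I = ⟨x_A² − x_A, x_B² − x_B, x_C² − x_C, x_A x_B x_C⟩. Then the polynomial 2 − x_A − x_B − x_C is a sum of squares modulo I of polynomials of degree at most 2. -/
open MvPolynomial

/-- For the triangle ideal `I = ⟨x_A² - x_A, x_B² - x_B, x_C² - x_C, x_A x_B x_C⟩`,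
the polynomial `2 - x_A - x_B - x_C` is 2-sos mod `I`. -/
theorem triangle_two_sos :
    ∃ (m : ℕ) (g : Fin m → MvPolynomial (Fin 3) ℝ),
      (∀ j, (g j).totalDegree ≤ 2) ∧
      ((2 : MvPolynomial (Fin 3) ℝ) - X 0 - X 1 - X 2) - ∑ j, (g j) ^ 2 ∈
        Ideal.span ({X 0 ^ 2 - X 0, X 1 ^ 2 - X 1, X 2 ^ 2 - X 2,
          X 0 * X 1 * X 2} : Set (MvPolynomial (Fin 3) ℝ)) := by
  set e : MvPolynomial (Fin 3) ℝ :=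
    1 - X 0 - X 1 - X 2 + X 0 * X 1 + X 1 * X 2 + X 2 * X 0 with he
  set p1 : MvPolynomial (Fin 3) ℝ := X 0 - X 0 * X 1 - X 0 * X 2 with hp1
  set p2 : MvPolynomial (Fin 3) ℝ := X 1 - X 0 * X 1 - X 1 * X 2 with hp2
  set p3 : MvPolynomial (Fin 3) ℝ := X 2 - X 0 * X 2 - X 1 * X 2 with hp3
  refine ⟨5, ![e, e, p1, p2, p3], ?_, ?_⟩
  · have hX : ∀ i : Fin 3, (X i : MvPolynomial (Fin 3) ℝ).totalDegree ≤ 2 := fun i => by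
      simp [totalDegree_X]
    have hXX : ∀ i j : Fin 3,
        ((X i * X j : MvPolynomial (Fin 3) ℝ)).totalDegree ≤ 2 := fun i j =>
      le_trans (totalDegree_mul _ _) (by simp [totalDegree_X])
    have h1 : (1 : MvPolynomial (Fin 3) ℝ).totalDegree ≤ 2 := by
      simp
    have hadd : ∀ p q : MvPolynomial (Fin 3) ℝ, p.totalDegree ≤ 2 → q.totalDegree ≤ 2 →
        (p + q).totalDegree ≤ 2 := fun p q hp hq =>
      le_trans (totalDegree_add p q) (max_le hp hq)
    have hsub : ∀ p q : MvPolynomial (Fin 3) ℝ, p.totalDegree ≤ 2 → q.totalDegree ≤ 2 →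
        (p - q).totalDegree ≤ 2 := fun p q hp hq => by
      rw [sub_eq_add_neg]
      exact hadd p (-q) hp (by rwa [totalDegree_neg])
    have hge : e.totalDegree ≤ 2 := by
      rw [he]
      exact hadd _ _ (hadd _ _ (hadd _ _ (hsub _ _ (hsub _ _ (hsub _ _ h1 (hX 0)) (hX 1))
        (hX 2)) (hXX 0 1)) (hXX 1 2)) (hXX 2 0)
    have hgp1 : p1.totalDegree ≤ 2 := by
      rw [hp1]; exact hsub _ _ (hsub _ _ (hX 0) (hXX 0 1)) (hXX 0 2)
    have hgp2 : p2.totalDegree ≤ 2 := by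
      rw [hp2]; exact hsub _ _ (hsub _ _ (hX 1) (hXX 0 1)) (hXX 1 2)
    have hgp3 : p3.totalDegree ≤ 2 := by
      rw [hp3]; exact hsub _ _ (hsub _ _ (hX 2) (hXX 0 2)) (hXX 1 2)
    intro j
    fin_cases j <;> simpa using by first | exact hge | exact hgp1 | exact hgp2 | exact hgp3
  · have key : ((2 : MvPolynomial (Fin 3) ℝ) - X 0 - X 1 - X 2)
        - ∑ j, (![e, e, p1, p2, p3] j) ^ 2 =
        (-4 * X 1 ^ 2 - 6 * X 1 * X 2 + 6 * X 1 - 4 * X 2 ^ 2 + 6 * X 2 - 3)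
          * (X 0 ^ 2 - X 0)
        + (-6 * X 0 * X 2 + 2 * X 0 - 4 * X 2 ^ 2 + 6 * X 2 - 3) * (X 1 ^ 2 - X 1)
        + (-6 * X 0 * X 1 + 2 * X 0 + 2 * X 1 - 3) * (X 2 ^ 2 - X 2)
        + (-6) * (X 0 * X 1 * X 2) := by
      simp only [Fin.sum_univ_five, he, hp1, hp2, hp3, Matrix.cons_val_zero,
        Matrix.cons_val_one, Matrix.head_cons, Matrix.cons_val_two, Matrix.tail_cons,
        Matrix.cons_val_three, Matrix.cons_val_four]
      ring
    rw [key]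
    have mem : ∀ p ∈ ({X 0 ^ 2 - X 0, X 1 ^ 2 - X 1, X 2 ^ 2 - X 2,
        X 0 * X 1 * X 2} : Set (MvPolynomial (Fin 3) ℝ)),
        p ∈ Ideal.span ({X 0 ^ 2 - X 0, X 1 ^ 2 - X 1, X 2 ^ 2 - X 2,
        X 0 * X 1 * X 2} : Set (MvPolynomial (Fin 3) ℝ)) := fun p hp => Ideal.subset_span hp
    refine Ideal.add_mem _ (Ideal.add_mem _ (Ideal.add_mem _ ?_ ?_) ?_) ?_ <;>
      exact Ideal.mul_mem_left _ _ (Ideal.subset_span (by simp))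
end

section
/- For variables x_1,…,x_{2k+1} with indices mod 2k+1, the identity k − ∑_{l=1}^{2k+1} x_l + ∑_{l=1}^{2k+1} x_l x_{l+1} = ∑_{l=1}^{k}(1 − x_{2l−1} − x_{2l} − x_{2l+1} + x_{2l−1}x_{2l} + x_{2l−1}x_{2l+1} + x_{2l}x_{2l+1}) + ∑_{l=2}^{k}(x_{2l−1} − x_{2l−1}x_1 − x_{2l−1}x_{2l+1} + x_{2l+1}x_1) holds as polynomials, and each summand in the two sums is idempotent modulo the ideal generated by {x_j² − x_j : 1 ≤ j ≤ 2k+1}. -/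
open MvPolynomial

/-- Variable `x_l` of the odd cycle, indices taken mod `2k+1`. -/
noncomputable def cycVar (k l : ℕ) : MvPolynomial (ZMod (2 * k + 1)) ℝ :=
  MvPolynomial.X (l : ZMod (2 * k + 1))

private lemma idem_aux1 {R : Type*} [CommRing R] (I : Ideal R) (a b c : R)
    (ha : a ^ 2 - a ∈ I) (hb : b ^ 2 - b ∈ I) (hc : c ^ 2 - c ∈ I) :
    (1 - a - b - c + a * b + a * c + b * c) ^ 2
      - (1 - a - b - c + a * b + a * c + b * c) ∈ I := by
  have key : (1 - a - b - c + a * b + a * c + b * c) ^ 2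
      - (1 - a - b - c + a * b + a * c + b * c)
      = (1 - b - c) ^ 2 * (a ^ 2 - a)
        + (1 - a - 2 * c + 2 * a * c + c ^ 2) * (b ^ 2 - b)
        + (1 - a - b + 2 * a * b) * (c ^ 2 - c) := by ring
  rw [key]
  exact I.add_mem (I.add_mem (I.mul_mem_left _ ha) (I.mul_mem_left _ hb))
    (I.mul_mem_left _ hc)

private lemma idem_aux2 {R : Type*} [CommRing R] (I : Ideal R) (a c u : R)
    (ha : a ^ 2 - a ∈ I) (hc : c ^ 2 - c ∈ I) (hu : u ^ 2 - u ∈ I) :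
    (a - a * u - a * c + c * u) ^ 2 - (a - a * u - a * c + c * u) ∈ I := by
  have key : (a - a * u - a * c + c * u) ^ 2 - (a - a * u - a * c + c * u)
      = (1 - c - u) ^ 2 * (a ^ 2 - a)
        + (a - 2 * a * u + u ^ 2) * (c ^ 2 - c)
        + (a + c - 2 * a * c) * (u ^ 2 - u) := by ring
  rw [key]
  exact I.add_mem (I.add_mem (I.mul_mem_left _ ha) (I.mul_mem_left _ hc))
    (I.mul_mem_left _ hu)

private lemma cycle_sum {R : Type*} [CommRing R] (f : ℕ → R) :
    ∀ k : ℕ, 1 ≤ k →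
    (k : R) - ∑ l ∈ Finset.Icc 1 (2 * k + 1), f l
      + (∑ l ∈ Finset.Icc 1 (2 * k), f l * f (l + 1) + f (2 * k + 1) * f 1)
    = ∑ l ∈ Finset.Icc 1 k,
        (1 - f (2 * l - 1) - f (2 * l) - f (2 * l + 1)
          + f (2 * l - 1) * f (2 * l) + f (2 * l - 1) * f (2 * l + 1)
          + f (2 * l) * f (2 * l + 1))
      + ∑ l ∈ Finset.Icc 2 k,
        (f (2 * l - 1) - f (2 * l - 1) * f 1 - f (2 * l - 1) * f (2 * l + 1)
          + f (2 * l + 1) * f 1) := by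
  intro k
  induction k with
  | zero => omega
  | succ k ih =>
    intro _
    by_cases hk0 : k = 0
    · subst hk0
      norm_num [Finset.sum_Icc_succ_top, Finset.Icc_self]
      ring
    · have hk1 : 1 ≤ k := Nat.one_le_iff_ne_zero.mpr hk0
      have e1 : 2 * (k + 1) + 1 = (2 * k + 1) + 1 + 1 := by ring
      have e2 : 2 * (k + 1) = (2 * k) + 1 + 1 := by ring
      rw [e1, e2,
        Finset.sum_Icc_succ_top (by omega), Finset.sum_Icc_succ_top (by omega),
        Finset.sum_Icc_succ_top (by omega), Finset.sum_Icc_succ_top (by omega),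
        Finset.sum_Icc_succ_top (show (1:ℕ) ≤ k + 1 by omega),
        Finset.sum_Icc_succ_top (show (2:ℕ) ≤ k + 1 by omega)]
      have ha : 2 * (k + 1) - 1 = 2 * k + 1 := by omega
      have hb : 2 * (k + 1) + 1 = 2 * k + 1 + 1 + 1 := by ring
      rw [ha, hb]
      simp only [show 2 * (k + 1) = 2 * k + 1 + 1 from by ring,
        show 2 * k + 2 + 1 = 2 * k + 1 + 1 + 1 from by ring]
      have hs2 : ∑ l ∈ Finset.Icc 1 (2 * k + 1), f l * f (l + 1)
          = ∑ l ∈ Finset.Icc 1 (2 * k), f l * f (l + 1)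
            + f (2 * k + 1) * f (2 * k + 1 + 1) :=
        Finset.sum_Icc_succ_top (by omega) _
      have hs3 : ∑ l ∈ Finset.Icc 1 (2 * k + 1), f l
          = ∑ l ∈ Finset.Icc 1 (2 * k), f l + f (2 * k + 1) :=
        Finset.sum_Icc_succ_top (by omega) _
      push_cast
      linear_combination ih hk1 + hs2 + hs3

/-- The final computation in Lemma 3.3: the polynomial identity
`k - ∑ x_l + ∑ x_l x_{l+1} = ∑_{l=1}^{k} (…) + ∑_{l=2}^{k} (…)`, where each
summand is idempotent mod `⟨x_j² - x_j⟩`. -/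
theorem odd_cycle_identity (k : ℕ) (hk : 1 ≤ k) :
    let g₁ : ℕ → MvPolynomial (ZMod (2 * k + 1)) ℝ := fun l =>
      1 - cycVar k (2 * l - 1) - cycVar k (2 * l) - cycVar k (2 * l + 1) +
        cycVar k (2 * l - 1) * cycVar k (2 * l) +
        cycVar k (2 * l - 1) * cycVar k (2 * l + 1) +
        cycVar k (2 * l) * cycVar k (2 * l + 1)
    let g₂ : ℕ → MvPolynomial (ZMod (2 * k + 1)) ℝ := fun l =>
      cycVar k (2 * l - 1) - cycVar k (2 * l - 1) * cycVar k 1 -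
        cycVar k (2 * l - 1) * cycVar k (2 * l + 1) +
        cycVar k (2 * l + 1) * cycVar k 1
    let I : Ideal (MvPolynomial (ZMod (2 * k + 1)) ℝ) :=
      Ideal.span {p | ∃ j : ZMod (2 * k + 1), p = X j ^ 2 - X j}
    ((k : MvPolynomial (ZMod (2 * k + 1)) ℝ) -
        ∑ l ∈ Finset.Icc 1 (2 * k + 1), cycVar k l +
        ∑ l ∈ Finset.Icc 1 (2 * k + 1), cycVar k l * cycVar k (l + 1) =
      ∑ l ∈ Finset.Icc 1 k, g₁ l + ∑ l ∈ Finset.Icc 2 k, g₂ l) ∧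
      (∀ l ∈ Finset.Icc 1 k, (g₁ l) ^ 2 - g₁ l ∈ I) ∧
      (∀ l ∈ Finset.Icc 2 k, (g₂ l) ^ 2 - g₂ l ∈ I) := by
  intro g₁ g₂ I
  have hX : ∀ m : ℕ, cycVar k m ^ 2 - cycVar k m ∈ I := fun m =>
    Ideal.subset_span ⟨(m : ZMod (2 * k + 1)), rfl⟩
  refine ⟨?_, fun l _ => idem_aux1 I _ _ _ (hX _) (hX _) (hX _),
    fun l _ => idem_aux2 I _ _ _ (hX _) (hX _) (hX _)⟩
  have hwrap : cycVar k (2 * k + 1 + 1) = cycVar k 1 := by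
    unfold cycVar
    congr 1
    have : ((2 * k + 1 + 1 : ℕ) : ZMod (2 * k + 1))
        = ((2 * k + 1 : ℕ) : ZMod (2 * k + 1)) + ((1 : ℕ) : ZMod (2 * k + 1)) := by
      push_cast; ring
    rw [this, ZMod.natCast_self]
    simp
  have hsplit : ∑ l ∈ Finset.Icc 1 (2 * k + 1), cycVar k l * cycVar k (l + 1)
      = ∑ l ∈ Finset.Icc 1 (2 * k), cycVar k l * cycVar k (l + 1)
        + cycVar k (2 * k + 1) * cycVar k 1 := by
    rw [Finset.sum_Icc_succ_top (show (1:ℕ) ≤ 2 * k + 1 by omega)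
      (fun l => cycVar k l * cycVar k (l + 1)), hwrap]
  rw [hsplit]
  exact cycle_sum (cycVar k) k hk
end
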